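/- Suppose γ : ℝ → ℝ^d satisfies a linear constant-coefficient ODE, so γ(s) = Σ_{j=1}^K q_j(s) e^{λ_j s} with distinct λ_j ∈ ℂ and nonzero ℂ^d-valued polynomials q_j. If ‖γ(s)‖ is constant in s, then every λ_j is purely imaginary and every q_j is a constant polynomial. -/

import Mathlib

open Polynomial Complex Finset

noncomputable def Lop (c : ℂ) (p : ℂ[X]) : ℂ[X] := derivative p + C c * p

lemma expoly_hasDerivAt (p : ℂ[X]) (c : ℂ) (s : ℝ) :
    HasDerivAt (fun t : ℝ => p.eval ↑t * Complex.exp (c * ↑t))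
      ((Lop c p).eval ↑s * Complex.exp (c * ↑s)) s := by
  have h1 : HasDerivAt (fun z : ℂ => p.eval z) ((derivative p).eval ↑s) ↑s :=
    p.hasDerivAt _
  have h2 : HasDerivAt (fun z : ℂ => Complex.exp (c * z)) (c * Complex.exp (c * ↑s)) ↑s := by
    simpa [mul_comm, Function.comp_def] using
      ((Complex.hasDerivAt_exp (c * ↑s)).comp (↑s : ℂ) ((hasDerivAt_id (↑s : ℂ)).const_mul c))
  have := (h1.mul h2).comp_ofReal
  convert this using 1 <;> simp [Lop, eval_add, eval_mul, eval_C] <;> ring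

lemma Lop_eq_zero {c : ℂ} (hc : c ≠ 0) {p : ℂ[X]} (h : Lop c p = 0) : p = 0 := by
  by_contra hp
  have h1 : p.coeff (p.natDegree + 1) = 0 :=
    coeff_eq_zero_of_natDegree_lt (lt_add_one _)
  have h2 : (Lop c p).coeff p.natDegree = c * p.leadingCoeff := by
    rw [Lop, coeff_add, coeff_derivative, coeff_C_mul, h1, leadingCoeff]
    ring
  rw [h] at h2
  simp only [coeff_zero] at h2
  rcases mul_eq_zero.mp h2.symm with h2 | h2
  · exact hc h2
  · exact hp (leadingCoeff_eq_zero.mp h2)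

lemma Lop_iterate_eq_zero {c : ℂ} (hc : c ≠ 0) {p : ℂ[X]} {n : ℕ}
    (h : (Lop c)^[n] p = 0) : p = 0 := by
  induction n with
  | zero => simpa using h
  | succ n ih =>
    rw [Function.iterate_succ_apply'] at h
    exact ih (Lop_eq_zero hc h)

lemma poly_eq_zero_of_real (p : ℂ[X]) (h : ∀ s : ℝ, p.eval ↑s = 0) : p = 0 :=
  p.eq_zero_of_infinite_isRoot
    (Set.infinite_of_injective_forall_mem Complex.ofReal_injective (fun s => h s))

lemma expoly_core : ∀ (n : ℕ) (T : Finset ℂ), T.card = n →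
    ∀ (P : ℂ → ℂ[X]),
    (∀ s : ℝ, ∑ μ ∈ T, (P μ).eval ↑s * Complex.exp (μ * ↑s) = 0) →
    ∀ μ ∈ T, P μ = 0 := by
  intro n
  induction n with
  | zero =>
    intro T hT P h μ hμ
    rw [Finset.card_eq_zero.mp hT] at hμ
    exact absurd hμ (Finset.notMem_empty μ)
  | succ n ih =>
    intro T hT P h
    obtain ⟨μ₀, hμ₀⟩ := Finset.card_pos.mp (by omega : 0 < T.card)
    set D := (P μ₀).natDegree + 1 with hD
    have hshift : ∀ (m : ℕ) (s : ℝ),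
        ∑ μ ∈ T, ((Lop (μ - μ₀))^[m] (P μ)).eval ↑s * Complex.exp ((μ - μ₀) * ↑s) = 0 := by
      intro m
      induction m with
      | zero =>
        intro s
        have h0 : (∑ μ ∈ T, (P μ).eval ↑s * Complex.exp (μ * ↑s))
            * Complex.exp (-μ₀ * ↑s) = 0 := by rw [h s]; ring
        rw [Finset.sum_mul] at h0
        simp only [Function.iterate_zero, id_eq]
        rw [← h0]
        refine Finset.sum_congr rfl fun μ _ => ?_
        rw [mul_assoc, ← Complex.exp_add, sub_mul, neg_mul, ← sub_eq_add_neg]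
      | succ m ihm =>
        intro s
        have hd : HasDerivAt
            (fun t : ℝ => ∑ μ ∈ T, ((Lop (μ - μ₀))^[m] (P μ)).eval ↑t
              * Complex.exp ((μ - μ₀) * ↑t))
            (∑ μ ∈ T, ((Lop (μ - μ₀))^[m+1] (P μ)).eval ↑s
              * Complex.exp ((μ - μ₀) * ↑s)) s := by
          refine HasDerivAt.fun_sum (fun μ _ => ?_)
          rw [Function.iterate_succ_apply']
          exact expoly_hasDerivAt _ _ s
        have hzero : (fun t : ℝ => ∑ μ ∈ T, ((Lop (μ - μ₀))^[m] (P μ)).eval ↑t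
            * Complex.exp ((μ - μ₀) * ↑t)) = fun _ => (0:ℂ) := funext ihm
        rw [hzero] at hd
        exact hd.unique (hasDerivAt_const s 0)
    have hdiag : (Lop (μ₀ - μ₀))^[D] (P μ₀) = 0 := by
      have hL0 : Lop (μ₀ - μ₀) = (derivative : ℂ[X] →ₗ[ℂ] ℂ[X]) := by
        funext p; simp [Lop]
      rw [hL0]
      exact iterate_derivative_eq_zero (lt_add_one _)
    have hinj : ∀ x ∈ T.erase μ₀, ∀ y ∈ T.erase μ₀, x - μ₀ = y - μ₀ → x = y :=
      fun x _ y _ hxy => by linear_combination hxy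
    set T' := (T.erase μ₀).image (· - μ₀) with hT'
    have hcard' : T'.card = n := by
      rw [hT', Finset.card_image_of_injOn hinj, Finset.card_erase_of_mem hμ₀, hT]
      omega
    set P' : ℂ → ℂ[X] := fun c => (Lop c)^[D] (P (c + μ₀)) with hP'def
    have heq' : ∀ s : ℝ, ∑ c ∈ T', (P' c).eval ↑s * Complex.exp (c * ↑s) = 0 := by
      intro s
      rw [hT', Finset.sum_image hinj]
      have hs := hshift D s
      rw [← Finset.add_sum_erase _ _ hμ₀, hdiag] at hs
      simp only [eval_zero, zero_mul, zero_add] at hs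
      rw [← hs]
      refine Finset.sum_congr rfl fun μ _ => ?_
      simp [hP'def, sub_add_cancel]
    have hP' := ih T' hcard' P' heq'
    have hPne : ∀ μ ∈ T.erase μ₀, P μ = 0 := by
      intro μ hμ
      have h1 : P' (μ - μ₀) = 0 := hP' _ (Finset.mem_image_of_mem _ hμ)
      have h2 : (Lop (μ - μ₀))^[D] (P μ) = 0 := by
        simpa [hP'def, sub_add_cancel] using h1
      exact Lop_iterate_eq_zero (sub_ne_zero.mpr (Finset.ne_of_mem_erase hμ)) h2
    intro μ hμ
    by_cases hμμ : μ = μ₀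
    · subst hμμ
      have hv : ∀ s : ℝ, (P μ).eval ↑s * Complex.exp (μ * ↑s) = 0 := by
        intro s
        have hs := h s
        rw [← Finset.add_sum_erase _ _ hμ₀,
          Finset.sum_eq_zero (fun ν hν => by rw [hPne ν hν]; simp), add_zero] at hs
        exact hs
      refine poly_eq_zero_of_real _ fun s => ?_
      have := hv s
      exact (mul_eq_zero.mp this).resolve_right (Complex.exp_ne_zero _)
    · exact hPne μ (Finset.mem_erase.mpr ⟨hμμ, hμ⟩)

lemma conj_eval (p : Polynomial ℂ) (s : ℝ) :
    (starRingEnd ℂ) (p.eval ↑s) = (p.map (starRingEnd ℂ)).eval ↑s := by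
  rw [eval_map]
  have h := Polynomial.eval₂_at_apply (p := p) (starRingEnd ℂ) ((s : ℝ) : ℂ)
  rw [Complex.conj_ofReal] at h
  exact h.symm

lemma expoly_grouped {ι : Type*} [Fintype ι] [DecidableEq ι] (μ : ι → ℂ) (P : ι → Polynomial ℂ)
    (h : ∀ s : ℝ, ∑ a, (P a).eval ↑s * Complex.exp (μ a * ↑s) = 0) (v : ℂ) :
    ∑ a ∈ Finset.univ.filter (fun a => μ a = v), P a = 0 := by
  classical
  set Q : ℂ → Polynomial ℂ := fun w => ∑ a ∈ Finset.univ.filter (fun a => μ a = w), P a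
    with hQ
  have hsum : ∀ s : ℝ, ∑ w ∈ Finset.univ.image μ, (Q w).eval ↑s * Complex.exp (w * ↑s) = 0 := by
    intro s
    rw [← h s]
    refine Finset.sum_image' _ (fun a _ => ?_)
    rw [hQ]
    rw [eval_finset_sum, Finset.sum_mul]
    refine Finset.sum_congr rfl fun b hb => ?_
    rw [(Finset.mem_filter.mp hb).2]
  by_cases hv : v ∈ Finset.univ.image μ
  · exact expoly_core _ _ rfl Q hsum v hv
  · refine Finset.sum_eq_zero fun a ha => ?_
    exfalso
    apply hv
    rw [← (Finset.mem_filter.mp ha).2]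
    exact Finset.mem_image_of_mem μ (Finset.mem_univ a)


/-- If a curve `γ : ℝ → ℝ^d` of constant norm has an
exponential-polynomial representation `γ(s) = Σ_j q_j(s) e^{λ_j s}` with
distinct `λ_j ∈ ℂ` and nonzero `ℂ^d`-valued polynomials `q_j`, then every
`λ_j` is purely imaginary and every `q_j` is constant. -/
theorem stmt10 (d K : ℕ) (hK : 1 ≤ K)
    (γ : ℝ → EuclideanSpace ℝ (Fin d))
    (lam : Fin K → ℂ) (hlam : Function.Injective lam)
    (q : Fin K → Fin d → Polynomial ℂ)
    (hq : ∀ j, q j ≠ 0)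
    (hrep : ∀ (s : ℝ) (i : Fin d),
      (γ s i : ℂ) = ∑ j : Fin K, (q j i).eval (s : ℂ) * Complex.exp (lam j * s))
    (c : ℝ) (hnorm : ∀ s : ℝ, ‖γ s‖ = c) :
    (∀ j, (lam j).re = 0) ∧ ∀ j i, (q j i).natDegree = 0 := by
  classical
  have hc0 : 0 ≤ c := (hnorm 0) ▸ norm_nonneg _
  set μ : Option (Fin K × Fin K) → ℂ := fun a =>
    a.elim 0 (fun p => lam p.1 + (starRingEnd ℂ) (lam p.2)) with hμ
  set P : Option (Fin K × Fin K) → Polynomial ℂ := fun a =>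
    a.elim (Polynomial.C (-((c:ℝ):ℂ)^2))
      (fun p => ∑ i : Fin d, q p.1 i * (q p.2 i).map (starRingEnd ℂ)) with hP
  have hnormsq : ∀ s : ℝ, ∑ i, (γ s i)^2 = c^2 := by
    intro s
    have h1 := hnorm s
    rw [EuclideanSpace.norm_eq] at h1
    have h2 : ∑ i, ‖γ s i‖^2 = c^2 := by
      rw [← h1, Real.sq_sqrt (by positivity)]
    simpa [Real.norm_eq_abs, sq_abs] using h2
  have hC : ∀ s : ℝ, ∑ i : Fin d, (((γ s i : ℝ) : ℂ) * (starRingEnd ℂ) ((γ s i : ℝ) : ℂ))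
      = ((c:ℝ):ℂ)^2 := by
    intro s
    have h3 := hnormsq s
    calc ∑ i : Fin d, (((γ s i : ℝ) : ℂ) * (starRingEnd ℂ) ((γ s i : ℝ) : ℂ))
        = ∑ i : Fin d, (((γ s i)^2 : ℝ) : ℂ) := by
          refine Finset.sum_congr rfl fun i _ => ?_
          rw [Complex.conj_ofReal, ← Complex.ofReal_mul, sq]
      _ = ((c:ℝ):ℂ)^2 := by
          rw [← Complex.ofReal_sum, h3, Complex.ofReal_pow]
  have hγconj : ∀ (s : ℝ) (i : Fin d), (starRingEnd ℂ) ((γ s i : ℝ) : ℂ)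
      = ∑ j, ((q j i).map (starRingEnd ℂ)).eval ↑s
          * Complex.exp ((starRingEnd ℂ) (lam j) * ↑s) := by
    intro s i
    rw [hrep s i, map_sum]
    refine Finset.sum_congr rfl fun j _ => ?_
    rw [map_mul, conj_eval, ← Complex.exp_conj, map_mul, Complex.conj_ofReal]
  have key : ∀ s : ℝ, ∑ a, (P a).eval ↑s * Complex.exp (μ a * ↑s) = 0 := by
    intro s
    rw [Fintype.sum_option]
    have hsome : ∑ p : Fin K × Fin K, (P (some p)).eval ↑s * Complex.exp (μ (some p) * ↑s)
        = ((c:ℝ):ℂ)^2 := by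
      have hterm : ∀ p : Fin K × Fin K, (P (some p)).eval ↑s * Complex.exp (μ (some p) * ↑s)
          = ∑ i : Fin d, ((q p.1 i).eval ↑s * Complex.exp (lam p.1 * ↑s)) *
              (((q p.2 i).map (starRingEnd ℂ)).eval ↑s
                * Complex.exp ((starRingEnd ℂ) (lam p.2) * ↑s)) := by
        intro p
        simp only [hP, hμ, Option.elim]
        rw [eval_finset_sum, Finset.sum_mul]
        refine Finset.sum_congr rfl fun i _ => ?_
        rw [eval_mul, add_mul, Complex.exp_add]
        ring
      rw [Finset.sum_congr rfl (fun p _ => hterm p), Finset.sum_comm]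
      calc ∑ i : Fin d, ∑ p : Fin K × Fin K, ((q p.1 i).eval ↑s * Complex.exp (lam p.1 * ↑s)) *
              (((q p.2 i).map (starRingEnd ℂ)).eval ↑s
                * Complex.exp ((starRingEnd ℂ) (lam p.2) * ↑s))
          = ∑ i : Fin d, (∑ j, (q j i).eval ↑s * Complex.exp (lam j * ↑s))
              * (∑ k, ((q k i).map (starRingEnd ℂ)).eval ↑s
                  * Complex.exp ((starRingEnd ℂ) (lam k) * ↑s)) := by
            refine Finset.sum_congr rfl fun i _ => ?_
            rw [Fintype.sum_prod_type]
            exact (Finset.sum_mul_sum Finset.univ Finset.univ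
              (fun j => (q j i).eval ↑s * Complex.exp (lam j * ↑s))
              (fun k => ((q k i).map (starRingEnd ℂ)).eval ↑s
                  * Complex.exp ((starRingEnd ℂ) (lam k) * ↑s))).symm
        _ = ∑ i : Fin d, (((γ s i : ℝ) : ℂ) * (starRingEnd ℂ) ((γ s i : ℝ) : ℂ)) := by
            refine Finset.sum_congr rfl fun i _ => ?_
            rw [← hrep s i, ← hγconj s i]
        _ = ((c:ℝ):ℂ)^2 := hC s
    rw [hsome]
    simp [hP, hμ]
  have hgroup : ∀ v : ℂ, ∑ a ∈ Finset.univ.filter (fun a => μ a = v), P a = 0 :=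
    fun v => expoly_grouped μ P key v
  have hPdiag : ∀ (j : Fin K) (s : ℝ), (P (some (j, j))).eval ↑s
      = ((∑ i, Complex.normSq ((q j i).eval ↑s) : ℝ) : ℂ) := by
    intro j s
    simp only [hP, Option.elim]
    rw [eval_finset_sum, Complex.ofReal_sum]
    refine Finset.sum_congr rfl fun i _ => ?_
    rw [eval_mul, ← conj_eval, Complex.mul_conj]
  have main : ∀ r : ℝ, (∃ j₀, (lam j₀).re = r) →
      (∀ j k, (lam j).re + (lam k).re = 2*r → (lam j).re = r ∧ (lam k).re = r) →
      r = 0 := by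
    rintro r ⟨j₀, hj₀⟩ hext
    by_contra hr0
    have hfib : ∀ a ∈ Finset.univ.filter (fun a => μ a = ((2*r:ℝ):ℂ)),
        ∃ j : Fin K, a = some (j, j) := by
      intro a ha
      have hμa := (Finset.mem_filter.mp ha).2
      match a with
      | none =>
        exfalso
        apply hr0
        simp only [hμ, Option.elim] at hμa
        have h2r : (2*r : ℝ) = 0 := by exact_mod_cast hμa.symm
        linarith
      | some (j, k) =>
        refine ⟨j, ?_⟩
        simp only [hμ, Option.elim] at hμa
        have hre : (lam j).re + (lam k).re = 2*r := by
          have := congrArg Complex.re hμa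
          simpa [Complex.add_re, Complex.conj_re, Complex.ofReal_re] using this
        have him : (lam j).im = (lam k).im := by
          have := congrArg Complex.im hμa
          simp only [Complex.add_im, Complex.conj_im, Complex.ofReal_im] at this
          linarith
        obtain ⟨h1, h2⟩ := hext j k hre
        have hlk : lam j = lam k := Complex.ext (by rw [h1, h2]) him
        rw [hlam hlk]
    have hj₀mem : (some (j₀, j₀)) ∈ Finset.univ.filter (fun a => μ a = ((2*r:ℝ):ℂ)) := by
      simp only [Finset.mem_filter, Finset.mem_univ, true_and, hμ, Option.elim]
      apply Complex.ext
      · simp [Complex.add_re, Complex.conj_re, hj₀]; ring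
      · simp [Complex.add_im, Complex.conj_im]
    have h0 := hgroup ((2*r:ℝ):ℂ)
    have heval : ∀ s : ℝ, ∑ a ∈ Finset.univ.filter (fun a => μ a = ((2*r:ℝ):ℂ)),
        (P a).eval ↑s = 0 := fun s => by rw [← eval_finset_sum, h0, eval_zero]
    have hq0 : ∀ (i : Fin d) (s : ℝ), (q j₀ i).eval ↑s = 0 := by
      intro i s
      have h2 : ∀ a ∈ Finset.univ.filter (fun a => μ a = ((2*r:ℝ):ℂ)),
          0 ≤ ((P a).eval (↑s:ℂ)).re := by
        intro a ha
        obtain ⟨j, rfl⟩ := hfib a ha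
        rw [hPdiag]
        simp only [Complex.ofReal_re]
        exact Finset.sum_nonneg fun _ _ => Complex.normSq_nonneg _
      have h3 : ((P (some (j₀, j₀))).eval (↑s:ℂ)).re = 0 := by
        refine (Finset.sum_eq_zero_iff_of_nonneg h2).mp ?_ _ hj₀mem
        rw [← Complex.re_sum, heval s, Complex.zero_re]
      rw [hPdiag] at h3
      simp only [Complex.ofReal_re] at h3
      have h4 := (Finset.sum_eq_zero_iff_of_nonneg
        (fun i _ => Complex.normSq_nonneg _)).mp h3 i (Finset.mem_univ i)
      exact Complex.normSq_eq_zero.mp h4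
    exact hq j₀ (funext fun i => poly_eq_zero_of_real _ (hq0 i))
  have hne : (Finset.univ : Finset (Fin K)).Nonempty := ⟨⟨0, hK⟩, Finset.mem_univ _⟩
  have hre0 : ∀ j, (lam j).re = 0 := by
    obtain ⟨jM, _, hjM⟩ := Finset.exists_max_image Finset.univ (fun j => (lam j).re) hne
    obtain ⟨jm, _, hjm⟩ := Finset.exists_min_image Finset.univ (fun j => (lam j).re) hne
    have hM : (lam jM).re = 0 := by
      refine main _ ⟨jM, rfl⟩ fun j k hjk => ?_
      have h1 := hjM j (Finset.mem_univ j)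
      have h2 := hjM k (Finset.mem_univ k)
      constructor <;> linarith
    have hm : (lam jm).re = 0 := by
      refine main _ ⟨jm, rfl⟩ fun j k hjk => ?_
      have h1 := hjm j (Finset.mem_univ j)
      have h2 := hjm k (Finset.mem_univ k)
      constructor <;> linarith
    intro j
    have h1 := hjM j (Finset.mem_univ j)
    have h2 := hjm j (Finset.mem_univ j)
    simp only [hM] at h1
    simp only [hm] at h2
    linarith
  refine ⟨hre0, ?_⟩
  have hzero := hgroup 0
  have hcond : ∀ (p : Fin K × Fin K), (μ (some p) = 0) ↔ p.2 = p.1 := by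
    rintro ⟨j, k⟩
    simp only [hμ, Option.elim]
    constructor
    · intro hμa
      have him : (lam j).im = (lam k).im := by
        have := congrArg Complex.im hμa
        simp only [Complex.add_im, Complex.conj_im, Complex.zero_im] at this
        linarith
      have hlk : lam j = lam k := Complex.ext (by rw [hre0, hre0]) him
      exact (hlam hlk).symm
    · rintro h
      subst h
      apply Complex.ext
      · simp [Complex.add_re, Complex.conj_re, hre0]
      · simp [Complex.add_im, Complex.conj_im]
  have hsum0 : Polynomial.C (-((c:ℝ):ℂ)^2) + ∑ j, P (some (j, j)) = 0 := by
    rw [Finset.sum_filter, Fintype.sum_option] at hzero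
    rw [if_pos (by simp [hμ])] at hzero
    have hh : ∑ p : Fin K × Fin K, (if μ (some p) = 0 then P (some p) else 0)
        = ∑ j, P (some (j, j)) := by
      rw [Fintype.sum_prod_type]
      refine Finset.sum_congr rfl fun j _ => ?_
      rw [Finset.sum_congr rfl (fun k _ => if_congr (hcond (j, k)) rfl rfl),
        Finset.sum_ite_eq' Finset.univ j (fun k => P (some (j, k)))]
      simp
    rw [hh] at hzero
    exact hzero
  have hbound : ∀ (j : Fin K) (i : Fin d) (s : ℝ),
      Complex.normSq ((q j i).eval ↑s) ≤ c^2 := by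
    intro j i s
    have h1 := congrArg (fun p => Polynomial.eval ((s:ℝ) : ℂ) p) hsum0
    simp only [eval_add, eval_finset_sum, eval_C, eval_zero] at h1
    have h2 : ∑ j, ((∑ i, Complex.normSq ((q j i).eval ↑s) : ℝ) : ℂ) = (((c^2 : ℝ)):ℂ) := by
      rw [← Finset.sum_congr rfl (fun j (_ : j ∈ Finset.univ) => hPdiag j s)]
      push_cast
      linear_combination h1
    have h3 : ∑ j, ∑ i, Complex.normSq ((q j i).eval ↑s) = c^2 := by
      rw [← Complex.ofReal_sum] at h2
      exact_mod_cast h2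
    calc Complex.normSq ((q j i).eval ↑s)
        ≤ ∑ i, Complex.normSq ((q j i).eval ↑s) :=
          Finset.single_le_sum (f := fun i => Complex.normSq ((q j i).eval ↑s))
            (fun _ _ => Complex.normSq_nonneg _) (Finset.mem_univ i)
      _ ≤ ∑ j, ∑ i, Complex.normSq ((q j i).eval ↑s) :=
          Finset.single_le_sum (f := fun j => ∑ i, Complex.normSq ((q j i).eval ↑s))
            (fun _ _ => Finset.sum_nonneg fun _ _ => Complex.normSq_nonneg _)
            (Finset.mem_univ j)
      _ = c^2 := h3
  intro j i
  by_contra hdne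
  have hdeg : 0 < (q j i).degree :=
    natDegree_pos_iff_degree_pos.mp (Nat.pos_of_ne_zero hdne)
  have htend : Filter.Tendsto (fun s : ℝ => ‖(q j i).eval ((s:ℝ):ℂ)‖)
      Filter.atTop Filter.atTop := by
    refine Polynomial.tendsto_norm_atTop _ hdeg ?_
    simpa [Complex.norm_real, Real.norm_eq_abs] using Filter.tendsto_abs_atTop_atTop
  obtain ⟨s, hs⟩ := (htend.eventually_ge_atTop (|c|+1)).exists
  have hb := hbound j i s
  rw [Complex.normSq_eq_norm_sq] at hb
  nlinarith [abs_nonneg c, _root_.sq_abs c]
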